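/- For any natural numbers m, n ≥ 1 and any finite tile set T with |T| ≥ 2, and any set of conditions L = {H^{p(t)}_t, V^{q(t)}_t : t ∈ T} with p(t), q(t) ≥ 2, there exist at least |T|^N tilings f : G_{m,n} → T that are L-dappled, where N = ⌈m/2⌉·⌈n/2⌉. -/
import Mathlib


/-- `f` violates the horizontal condition `H^p_t` at cell `(i,j)`:
`f (i,j) = f (i-1,j) = ⋯ = f (i-p,j) = t`. -/
def vioH {T : Type*} (f : ℕ → ℕ → T) (p : ℕ) (t : T) (i j : ℕ) : Prop :=
  p ≤ i ∧ ∀ s ≤ p, f (i - s) j = t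

/-- `f` violates the vertical condition `V^q_t` at cell `(i,j)`. -/
def vioV {T : Type*} (f : ℕ → ℕ → T) (q : ℕ) (t : T) (i j : ℕ) : Prop :=
  q ≤ j ∧ ∀ s ≤ q, f i (j - s) = t

/-- `f` is `L`-dappled on the grid `G_{m,n}` for
`L = {H^{p(t)}_t, V^{q(t)}_t : t ∈ T}`. -/
def Dappled {T : Type*} (m n : ℕ) (p q : T → ℕ) (f : ℕ → ℕ → T) : Prop :=
  ∀ t : T, ∀ i < m, ∀ j < n, ¬ vioH f (p t) t i j ∧ ¬ vioV f (q t) t i j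

theorem stmt0 {T : Type*} [Fintype T] (m n : ℕ) (hm : 1 ≤ m) (hn : 1 ≤ n)
    (hT : 2 ≤ Fintype.card T) (p q : T → ℕ)
    (hp : ∀ t, 2 ≤ p t) (hq : ∀ t, 2 ≤ q t) :
    Fintype.card T ^ (((m + 1) / 2) * ((n + 1) / 2)) ≤
      Nat.card {f : Fin m → Fin n → T //
        Dappled m n p q
          (fun i j => f ⟨i % m, Nat.mod_lt i hm⟩ ⟨j % n, Nat.mod_lt j hn⟩)} := by
  classical
  set M := (m + 1) / 2 with hMdef
  set N := (n + 1) / 2 with hNdef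
  have hM : 0 < M := by omega
  have hN : 0 < N := by omega
  obtain ⟨τ, hτ⟩ : ∃ τ : T → T, ∀ x, τ x ≠ x := by
    refine ⟨fun x => (Fintype.exists_ne_of_one_lt_card (by omega) x).choose,
      fun x => (Fintype.exists_ne_of_one_lt_card (by omega) x).choose_spec⟩
  set F : (ℕ → ℕ → T) → ℕ → ℕ → T :=
    fun c i j => τ^[i % 2 + j % 2] (c (i / 2) (j / 2)) with hF
  have keyH : ∀ c i j, i % 2 = 1 → F c i j ≠ F c (i - 1) j := by
    intro c i j hi
    have h1 : (i - 1) % 2 = 0 := by omega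
    have h2 : (i - 1) / 2 = i / 2 := by omega
    simp only [hF, h1, h2, hi, Nat.zero_add]
    rw [show 1 + j % 2 = j % 2 + 1 from by omega, Function.iterate_succ_apply']
    exact hτ _
  have keyV : ∀ c i j, j % 2 = 1 → F c i j ≠ F c i (j - 1) := by
    intro c i j hj
    have h1 : (j - 1) % 2 = 0 := by omega
    have h2 : (j - 1) / 2 = j / 2 := by omega
    simp only [hF, h1, h2, hj, Nat.add_zero]
    rw [Function.iterate_succ_apply']
    exact hτ _
  -- the embedding on the level of ℕ-indexed functions
  set lift : ((Fin M × Fin N) → T) → ℕ → ℕ → T :=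
    fun c a b => c (⟨a % M, Nat.mod_lt a hM⟩, ⟨b % N, Nat.mod_lt b hN⟩) with hlift
  set emb : ((Fin M × Fin N) → T) → (Fin m → Fin n → T) :=
    fun c i j => F (lift c) i j with hemb
  have hdap : ∀ c, Dappled m n p q
      (fun i j => emb c ⟨i % m, Nat.mod_lt i hm⟩ ⟨j % n, Nat.mod_lt j hn⟩) := by
    intro c t i hi j hj
    have hval : ∀ s, i - s < m := fun s => by omega
    have hval' : ∀ s, j - s < n := fun s => by omega
    constructor
    · rintro ⟨hpi, hv⟩
      have hv' : ∀ s ≤ p t, F (lift c) (i - s) j = t := by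
        intro s hs
        have := hv s hs
        simpa [Nat.mod_eq_of_lt (hval s), Nat.mod_eq_of_lt hj] using this
      have hp2 : 2 ≤ p t := hp t
      set s0 : ℕ := 1 - i % 2 with hs0
      have hodd : (i - s0) % 2 = 1 := by omega
      have hsub : i - (s0 + 1) = (i - s0) - 1 := by omega
      have e1 := hv' s0 (by omega)
      have e2 := hv' (s0 + 1) (by omega)
      rw [hsub] at e2
      exact keyH (lift c) (i - s0) j hodd (e1.trans e2.symm)
    · rintro ⟨hqj, hv⟩
      have hv' : ∀ s ≤ q t, F (lift c) i (j - s) = t := by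
        intro s hs
        have := hv s hs
        simpa [Nat.mod_eq_of_lt (hval' s), Nat.mod_eq_of_lt hi] using this
      have hq2 : 2 ≤ q t := hq t
      set s0 : ℕ := 1 - j % 2 with hs0
      have hodd : (j - s0) % 2 = 1 := by omega
      have hsub : j - (s0 + 1) = (j - s0) - 1 := by omega
      have e1 := hv' s0 (by omega)
      have e2 := hv' (s0 + 1) (by omega)
      rw [hsub] at e2
      exact keyV (lift c) i (j - s0) hodd (e1.trans e2.symm)
  set emb' : ((Fin M × Fin N) → T) →
      {f : Fin m → Fin n → T //
        Dappled m n p q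
          (fun i j => f ⟨i % m, Nat.mod_lt i hm⟩ ⟨j % n, Nat.mod_lt j hn⟩)} :=
    fun c => ⟨emb c, hdap c⟩ with hemb'
  have hinj : Function.Injective emb' := by
    intro c1 c2 h
    have h' : emb c1 = emb c2 := congrArg Subtype.val h
    funext x
    obtain ⟨⟨a, ha⟩, ⟨b, hb⟩⟩ := x
    have h2a : 2 * a < m := by omega
    have h2b : 2 * b < n := by omega
    have := congrFun (congrFun h' ⟨2 * a, h2a⟩) ⟨2 * b, h2b⟩
    have hrw : ∀ c : (Fin M × Fin N) → T,
        emb c ⟨2 * a, h2a⟩ ⟨2 * b, h2b⟩ = c (⟨a, ha⟩, ⟨b, hb⟩) := by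
      intro c
      have e1 : (2 * a) % 2 = 0 := by omega
      have e2 : (2 * b) % 2 = 0 := by omega
      have e3 : (2 * a) / 2 = a := by omega
      have e4 : (2 * b) / 2 = b := by omega
      simp only [hemb, hF, hlift, e1, e2, e3, e4, Nat.add_zero,
        Function.iterate_zero_apply]
      congr 2 <;> simp [Nat.mod_eq_of_lt, ha, hb]
    rw [hrw c1, hrw c2] at this
    exact this
  have hcard := Nat.card_le_card_of_injective emb' hinj
  calc Fintype.card T ^ (M * N)
      = Nat.card ((Fin M × Fin N) → T) := by
        rw [Nat.card_eq_fintype_card, Fintype.card_fun]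
        simp [mul_comm]
    _ ≤ _ := hcard
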